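/- For every real-valued càdlàg function x on [0,∞) and every T > 0, limsup_{k→∞} max_{1≤r≤k} |x(rT/k) − x((r−1)T/k)| = sup_{0<t≤T} |x(t) − x(t−)|, where x(t−) denotes the left limit of x at t. -/

import Mathlib

open MeasureTheory Set Filter Topology ProbabilityTheory
open scoped ENNReal NNReal

noncomputable section

namespace RV

/-! ### The space `L²_loc` and the weak dual (`L²_w`) topology -/

/-- Membership in `L²_loc`: measurable, locally square integrable on `(0,T]` for all `T > 0`. -/
def LlocMem (f : ℝ → ℝ) : Prop :=
  Measurable f ∧ ∀ T : ℝ, 0 < T → IntegrableOn (fun t => (f t) ^ 2) (Ioc 0 T) volume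

/-- The space `L²_loc`. -/
def Lloc : Type := {f : ℝ → ℝ // LlocMem f}

lemma zero_mem_Lloc : LlocMem (fun _ => (0 : ℝ)) := by
  refine ⟨measurable_const, fun T hT => ?_⟩
  have h : (fun t : ℝ => ((fun _ : ℝ => (0 : ℝ)) t) ^ 2) = fun _ : ℝ => (0 : ℝ) := by
    funext t; norm_num
  rw [h]
  exact integrableOn_const measure_Ioc_lt_top.ne

open Classical in
/-- Interpret a raw function as an element of `L²_loc` (junk value if not a member). -/
def mkLloc (f : ℝ → ℝ) : Lloc := if h : LlocMem f then ⟨f, h⟩ else ⟨fun _ => 0, zero_mem_Lloc⟩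

/-- The norm `|x|_T = (∫_0^T x(t)² dt)^{1/2}`. -/
def locNorm (T : ℝ) (f : ℝ → ℝ) : ℝ := Real.sqrt (∫ t in Ioc (0 : ℝ) T, (f t) ^ 2)

/-- Test pairs `(T, f)` with `T > 0` and `f ∈ L²[0,T]`. -/
def TestIdx : Type :=
  {p : ℝ × (ℝ → ℝ) // 0 < p.1 ∧ Measurable p.2 ∧
    IntegrableOn (fun t => (p.2 t) ^ 2) (Ioc 0 p.1) volume}

/-- The pairing `x ↦ ∫_0^T x(t) f(t) dt`. -/
def pairing (p : TestIdx) (x : Lloc) : ℝ := ∫ t in Ioc (0 : ℝ) p.1.1, x.1 t * p.1.2 t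

/-- The `L²_w`-topology on `L²_loc`: the initial topology for all the pairings. -/
instance : TopologicalSpace Lloc :=
  ⨅ p : TestIdx, TopologicalSpace.induced (pairing p) inferInstance

instance : MeasurableSpace Lloc := borel Lloc

/-! ### Tightness and convergence in distribution -/

/-- Tightness of the laws of a sequence of random elements of a topological space. -/
def TightLaws {Ω : Type*} [MeasurableSpace Ω] {α : Type*} [TopologicalSpace α]
    (P : Measure Ω) (X : ℕ → Ω → α) : Prop :=
  ∀ ε : ℝ≥0∞, 0 < ε → ∃ K : Set α, IsCompact K ∧ ∀ n, P ((X n) ⁻¹' Kᶜ) ≤ ε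

/-- Tightness of a sequence of real random variables. -/
def TightReal {Ω : Type*} [MeasurableSpace Ω] (P : Measure Ω) (g : ℕ → Ω → ℝ) : Prop :=
  ∀ ε : ℝ≥0∞, 0 < ε → ∃ M : ℝ, ∀ n, P {ω | M < |g n ω|} ≤ ε

/-- Convergence in distribution (weak convergence of laws) of random elements of a
topological space, the limit being allowed to live on a different probability space. -/
def ConvInDist {Ω Ω' α : Type*} [MeasurableSpace Ω] [MeasurableSpace Ω'] [TopologicalSpace α]
    (P : Measure Ω) (P' : Measure Ω') (X : ℕ → Ω → α) (Y : Ω' → α) : Prop :=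
  ∀ F : BoundedContinuousFunction α ℝ,
    Tendsto (fun n => ∫ ω, F (X n ω) ∂P) atTop (𝓝 (∫ ω, F (Y ω) ∂P'))

/-- Convergence of finite dimensional distributions, for times in `S`. -/
def FddConvOn {Ω Ω' β : Type*} [MeasurableSpace Ω] [MeasurableSpace Ω'] [TopologicalSpace β]
    (S : Set ℝ) (P : Measure Ω) (P' : Measure Ω')
    (X : ℕ → Ω → ℝ → β) (Y : Ω' → ℝ → β) : Prop :=
  ∀ (m : ℕ) (ts : Fin m → ℝ), (∀ i, ts i ∈ S) →
    ConvInDist P P' (fun n ω => fun i => X n ω (ts i)) (fun ω => fun i => Y ω (ts i))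

/-- Equality of all finite dimensional distributions (over nonnegative times). -/
def FddEq {Ω Ω' β : Type*} [MeasurableSpace Ω] [MeasurableSpace Ω'] [MeasurableSpace β]
    (P : Measure Ω) (P' : Measure Ω') (X : Ω → ℝ → β) (Y : Ω' → ℝ → β) : Prop :=
  ∀ (m : ℕ) (ts : Fin m → ℝ), (∀ i, 0 ≤ ts i) →
    Measure.map (fun ω => fun i => X ω (ts i)) P
      = Measure.map (fun ω => fun i => Y ω (ts i)) P'

/-- The integral operator `I(x)(t) = ∫_0^t x(s) ds`. -/
def Itg (x : ℝ → ℝ) (t : ℝ) : ℝ := ∫ s in Ioc (0 : ℝ) t, x s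

/-! ### Càdlàg paths, monotone paths and inverses -/

/-- `f` is càdlàg on `[0,∞)`: right-continuous everywhere on `[0,∞)`,
with left limits at every `t > 0`. -/
def IsCadlag {E : Type*} [TopologicalSpace E] (f : ℝ → E) : Prop :=
  (∀ t : ℝ, 0 ≤ t → ContinuousWithinAt f (Ici t) t) ∧
  (∀ t : ℝ, 0 < t → ∃ L : E, Tendsto f (𝓝[<] t) (𝓝 L))

/-- The right-continuous generalized inverse `τ(s) = inf{t ≥ 0 : y(t) > s}`. -/
def rinv (y : ℝ → ℝ) (s : ℝ) : ℝ := sInf {t : ℝ | 0 ≤ t ∧ s < y t}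

/-- The set `D_↑`: càdlàg, non-negative, non-decreasing, tending to infinity. -/
def DUp (y : ℝ → ℝ) : Prop :=
  IsCadlag y ∧ (∀ t : ℝ, 0 ≤ t → 0 ≤ y t) ∧ MonotoneOn y (Ici 0) ∧ Tendsto y atTop atTop

/-! ### The moduli `𝕄`, `𝕁`, `ℂ` and the associated tightness/weak convergence notions -/

/-- `𝕄(a,b,c)`: distance from `b` to the segment `[a,c]`. -/
def MM {E : Type*} [SeminormedAddCommGroup E] [NormedSpace ℝ E] (a b c : E) : ℝ :=
  Metric.infDist b (segment ℝ a c)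

/-- `𝕁(a,b,c) = min(‖b-a‖, ‖b-c‖)`. -/
def JJ {E : Type*} [SeminormedAddCommGroup E] (a b c : E) : ℝ := min ‖b - a‖ ‖b - c‖

/-- `ℂ(a,b,c) = ‖c-a‖`. -/
def CC {E : Type*} [SeminormedAddCommGroup E] (a b c : E) : ℝ := ‖c - a‖

/-- The oscillation modulus `ω_H(x, δ, T)` built from a functional `H` on triples. -/
def osc {E : Type*} (H : E → E → E → ℝ) (x : ℝ → E) (δ T : ℝ) : ℝ :=
  sSup {r : ℝ | ∃ t1 t2 t3 : ℝ, 0 ≤ t1 ∧ t1 < t2 ∧ t2 < t3 ∧ t3 ≤ T ∧ t3 - t1 < δ ∧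
    r = H (x t1) (x t2) (x t3)}

/-- The modulus condition in `H₁`-tightness:
`lim_{δ→0⁺} limsup_n P(ω_H(X_n,δ,T) > ε) = 0` for all `ε, T > 0`. -/
def TightMod {Ω E : Type*} [MeasurableSpace Ω] (H : E → E → E → ℝ)
    (P : Measure Ω) (X : ℕ → Ω → ℝ → E) : Prop :=
  ∀ ε T : ℝ, 0 < ε → 0 < T →
    Tendsto (fun δ : ℝ => limsup (fun n => P {ω | ε < osc H (X n ω) δ T}) atTop)
      (𝓝[>] (0 : ℝ)) (𝓝 (0 : ℝ≥0∞))

/-- Tightness of the marginals over a dense set of times containing `0`. -/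
def TightMarginals {Ω E : Type*} [MeasurableSpace Ω] [TopologicalSpace E]
    (P : Measure Ω) (X : ℕ → Ω → ℝ → E) : Prop :=
  ∃ S : Set ℝ, S ⊆ Ici 0 ∧ (0 : ℝ) ∈ S ∧ Ici (0 : ℝ) ⊆ closure S ∧
    ∀ t ∈ S, ∀ ε : ℝ≥0∞, 0 < ε → ∃ K : Set E, IsCompact K ∧ ∀ n, P {ω | X n ω t ∉ K} ≤ ε

/-- `H₁`-tightness of a sequence of `D`-valued processes. -/
def TightH {Ω E : Type*} [MeasurableSpace Ω] [TopologicalSpace E] (H : E → E → E → ℝ)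
    (P : Measure Ω) (X : ℕ → Ω → ℝ → E) : Prop :=
  TightMarginals P X ∧ TightMod H P X

/-- Weak convergence in the `H₁`-topology: `H₁`-tightness plus convergence of the
finite dimensional distributions over a dense set of times containing `0`. -/
def WeakH {Ω Ω' E : Type*} [MeasurableSpace Ω] [MeasurableSpace Ω'] [TopologicalSpace E]
    (H : E → E → E → ℝ) (P : Measure Ω) (P' : Measure Ω')
    (X : ℕ → Ω → ℝ → E) (Y : Ω' → ℝ → E) : Prop :=
  TightH H P X ∧ ∃ S : Set ℝ, S ⊆ Ici 0 ∧ (0 : ℝ) ∈ S ∧ Ici (0 : ℝ) ⊆ closure S ∧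
    FddConvOn S P P' X Y

/-- `M₁`-convergence of deterministic càdlàg functions: pointwise convergence on a dense
set of times containing `0`, plus the vanishing `𝕄`-modulus condition. -/
def M1ConvDet {E : Type*} [SeminormedAddCommGroup E] [NormedSpace ℝ E]
    (x : ℕ → ℝ → E) (y : ℝ → E) : Prop :=
  (∃ S : Set ℝ, S ⊆ Ici 0 ∧ (0 : ℝ) ∈ S ∧ Ici (0 : ℝ) ⊆ closure S ∧
      ∀ t ∈ S, Tendsto (fun n => x n t) atTop (𝓝 (y t))) ∧
  ∀ T : ℝ, 0 < T →
    Tendsto (fun δ : ℝ => limsup (fun n => osc MM (x n) δ T) atTop) (𝓝[>] (0 : ℝ)) (𝓝 (0 : ℝ))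

/-! ### Martingales, compensators, Brownian motion, Lévy processes -/

/-- A martingale on the nonnegative time axis. -/
def MartingaleNN {Ω : Type*} {m0 : MeasurableSpace Ω} (ℱ : Filtration ℝ m0)
    (P : Measure Ω) (M : ℝ → Ω → ℝ) : Prop :=
  (∀ t : ℝ, 0 ≤ t → Measurable[ℱ t] (M t)) ∧
  (∀ t : ℝ, 0 ≤ t → Integrable (M t) P) ∧
  (∀ s t : ℝ, 0 ≤ s → s ≤ t → P[M t|ℱ s] =ᵐ[P] M s)

/-- The predictable σ-algebra on `ℝ × Ω` associated with a filtration. -/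
def predictableSigma {Ω : Type*} (m0 : MeasurableSpace Ω) (ℱ : Filtration ℝ m0) :
    MeasurableSpace (ℝ × Ω) :=
  MeasurableSpace.generateFrom
    ({S | ∃ s t : ℝ, ∃ A : Set Ω, 0 ≤ s ∧ s < t ∧ MeasurableSet[ℱ s] A ∧ S = Ioc s t ×ˢ A} ∪
     {S | ∃ A : Set Ω, MeasurableSet[ℱ 0] A ∧ S = ({0} : Set ℝ) ×ˢ A})

/-- `A = ⟨M⟩` is the predictable compensator (predictable quadratic variation) of the
square integrable martingale `M`: a predictable, non-decreasing càdlàg process vanishing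
at `0` such that `M² - A` is a martingale. -/
def IsCompensator {Ω : Type*} {m0 : MeasurableSpace Ω} (ℱ : Filtration ℝ m0)
    (P : Measure Ω) (M A : ℝ → Ω → ℝ) : Prop :=
  (∀ ω, A 0 ω = 0) ∧
  (∀ ω, MonotoneOn (fun t => A t ω) (Ici 0)) ∧
  (∀ ω, IsCadlag (fun t => A t ω)) ∧
  (@Measurable (ℝ × Ω) ℝ (predictableSigma m0 ℱ) _ (fun p => A p.1 p.2)) ∧
  MartingaleNN ℱ P (fun t ω => (M t ω) ^ 2 - A t ω)

/-- `Q = [M]` is the quadratic variation of the square integrable martingale `M`: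
an adapted non-decreasing càdlàg process vanishing at `0` such that `M² - Q` is a
martingale and whose jumps are the squared jumps of `M`. -/
def IsQuadVar {Ω : Type*} {m0 : MeasurableSpace Ω} (ℱ : Filtration ℝ m0)
    (P : Measure Ω) (M Q : ℝ → Ω → ℝ) : Prop :=
  (∀ ω, Q 0 ω = 0) ∧
  (∀ ω, MonotoneOn (fun t => Q t ω) (Ici 0)) ∧
  (∀ ω, IsCadlag (fun t => Q t ω)) ∧
  (∀ t : ℝ, 0 ≤ t → Measurable[ℱ t] (Q t)) ∧
  MartingaleNN ℱ P (fun t ω => (M t ω) ^ 2 - Q t ω) ∧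
  (∀ ω, ∀ t : ℝ, 0 < t →
    Q t ω - Function.leftLim (fun s => Q s ω) t
      = (M t ω - Function.leftLim (fun s => M s ω) t) ^ 2)

/-- A standard Brownian motion (on `[0,∞)`). -/
structure IsBrownian {Ω : Type*} [MeasurableSpace Ω] (P : Measure Ω) (W : Ω → ℝ → ℝ) :
    Prop where
  init : ∀ ω, W ω 0 = 0
  cont : ∀ ω, ContinuousOn (W ω) (Ici 0)
  meas : ∀ t : ℝ, Measurable (fun ω => W ω t)
  incr_law : ∀ s t : ℝ, 0 ≤ s → s ≤ t →
    Measure.map (fun ω => W ω t - W ω s) P = gaussianReal 0 (Real.toNNReal (t - s))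
  indep_incr : ∀ (m : ℕ) (ts : Fin (m + 1) → ℝ), (∀ i, 0 ≤ ts i) → Monotone ts →
    iIndepFun
      (fun i : Fin m => fun ω => W ω (ts i.succ) - W ω (ts i.castSucc)) P

/-- A Brownian motion with respect to a filtration `𝔽`. -/
structure IsFBrownian {Ω : Type*} [mΩ : MeasurableSpace Ω] (P : Measure Ω)
    (ℱ : Filtration ℝ mΩ) (W : Ω → ℝ → ℝ) extends IsBrownian P W : Prop where
  adapted : ∀ t : ℝ, 0 ≤ t → Measurable[ℱ t] (fun ω => W ω t)
  indep_past : ∀ s t : ℝ, 0 ≤ s → s ≤ t →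
    Indep (MeasurableSpace.comap (fun ω => W ω t - W ω s) (borel ℝ)) (ℱ s) P

/-- An inhomogeneous Lévy process: càdlàg, adapted, starting at `0`, with increments
independent of the past (hence with deterministic characteristics) and without fixed
times of discontinuity. -/
structure IsInhomLevy {Ω : Type*} [mΩ : MeasurableSpace Ω] (P : Measure Ω)
    (ℱ : Filtration ℝ mΩ) (A : Ω → ℝ → ℝ) : Prop where
  init : ∀ ω, A ω 0 = 0
  cadlag : ∀ ω, IsCadlag (A ω)
  adapted : ∀ t : ℝ, 0 ≤ t → Measurable[ℱ t] (fun ω => A ω t)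
  indep_incr : ∀ s t : ℝ, 0 ≤ s → s ≤ t →
    Indep (MeasurableSpace.comap (fun ω => A ω t - A ω s) (borel ℝ)) (ℱ s) P
  no_fixed_disc : ∀ t : ℝ, 0 < t → ∀ᵐ ω ∂P, Tendsto (A ω) (𝓝[<] t) (𝓝 (A ω t))


/-- A packaged probability space, used to state existential conclusions
("there exists a probability space carrying ..."). -/
structure ProbPack where
  carrier : Type
  inst : MeasurableSpace carrier
  P : @Measure carrier inst
  isProb : @IsProbabilityMeasure carrier inst P

attribute [instance] ProbPack.inst ProbPack.isProb

end RV

namespace RV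
lemma cadlag_tendsto_right {x : ℝ → ℝ} (hx : IsCadlag x) {t : ℝ} (ht : 0 ≤ t)
    {s : ℕ → ℝ} (hs : Tendsto s atTop (𝓝 t)) (hge : ∀ᶠ n in atTop, t ≤ s n) :
    Tendsto (fun n => x (s n)) atTop (𝓝 (x t)) :=
  (hx.1 t ht).tendsto.comp
    (tendsto_nhdsWithin_of_tendsto_nhds_of_eventually_within s hs hge)

lemma cadlag_tendsto_left {x : ℝ → ℝ} (hx : IsCadlag x) {t : ℝ} (ht : 0 < t)
    {s : ℕ → ℝ} (hs : Tendsto s atTop (𝓝 t)) (hlt : ∀ᶠ n in atTop, s n < t) :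
    Tendsto (fun n => x (s n)) atTop (𝓝 (Function.leftLim x t)) := by
  obtain ⟨L, hL⟩ := hx.2 t ht
  rw [leftLim_eq_of_tendsto hL]
  exact hL.comp (tendsto_nhdsWithin_of_tendsto_nhds_of_eventually_within s hs hlt)

lemma cadlag_bounded {x : ℝ → ℝ} (hx : IsCadlag x) (T : ℝ) :
    ∃ M : ℝ, ∀ t ∈ Icc (0:ℝ) T, |x t| ≤ M := by
  by_contra h
  push_neg at h
  choose s hs hs' using fun n : ℕ => h n
  obtain ⟨t, htmem, ψ, hψ, hconv⟩ := isCompact_Icc.tendsto_subseq hs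
  have key : ∀ χ : ℕ → ℕ, StrictMono χ → ∀ c : ℝ,
      Tendsto (fun n => x (s (ψ (χ n)))) atTop (𝓝 c) → False := by
    intro χ hχ c hc
    have hb : ∀ᶠ n in atTop, |x (s (ψ (χ n)))| ≤ |c| + 1 :=
      hc.abs.eventually (eventually_le_nhds (by linarith [abs_nonneg c]))
    have hb2 : ∀ᶠ n : ℕ in atTop, (n : ℝ) < |c| + 1 := by
      filter_upwards [hb] with n hn
      have h1 : (n : ℝ) ≤ (ψ (χ n) : ℝ) := by
        exact_mod_cast le_trans hχ.le_apply (hψ.le_apply)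
      exact lt_of_le_of_lt h1 (lt_of_lt_of_le (hs' _) hn)
    have hb3 : ∀ᶠ n : ℕ in atTop, (|c| + 1 : ℝ) ≤ (n : ℝ) :=
      (tendsto_natCast_atTop_atTop (R := ℝ)).eventually_ge_atTop _
    obtain ⟨n, hn1, hn2⟩ := (hb2.and hb3).exists
    linarith
  have hcases : ∀ᶠ n in (atTop : Filter ℕ), t ≤ s (ψ n) ∨ s (ψ n) < t :=
    Eventually.of_forall fun n => le_or_gt t (s (ψ n))
  rcases frequently_or_distrib.mp hcases.frequently with h | h
  · obtain ⟨χ, hχ, hP⟩ := extraction_of_frequently_atTop h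
    exact key χ hχ (x t)
      (cadlag_tendsto_right hx htmem.1 (hconv.comp hχ.tendsto_atTop) (Eventually.of_forall hP))
  · obtain ⟨χ, hχ, hP⟩ := extraction_of_frequently_atTop h
    have ht0 : 0 < t := lt_of_le_of_lt (hs (ψ (χ 0))).1 (hP 0)
    exact key χ hχ (Function.leftLim x t)
      (cadlag_tendsto_left hx ht0 (hconv.comp hχ.tendsto_atTop) (Eventually.of_forall hP))

/-- Remark `error`. For every càdlàg `x` and `T > 0`,
`limsup_k max_{1≤r≤k} |x(rT/k) - x((r-1)T/k)| = sup_{0<t≤T} |Δx(t)|`. -/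
theorem stmt_14 (x : ℝ → ℝ) (hx : IsCadlag x) (T : ℝ) (hT : 0 < T) :
    limsup (fun k : ℕ => ⨆ r : Fin k, |x (((r : ℕ) + 1) * T / k) - x ((r : ℕ) * T / k)|)
        atTop
      = sSup {v : ℝ | ∃ t : ℝ, 0 < t ∧ t ≤ T ∧ v = |x t - Function.leftLim x t|} := by
  set f : ℕ → ℝ :=
    fun k => ⨆ r : Fin k, |x (((r : ℕ) + 1) * T / k) - x ((r : ℕ) * T / k)| with hfdef
  set V : Set ℝ := {v : ℝ | ∃ t : ℝ, 0 < t ∧ t ≤ T ∧ v = |x t - Function.leftLim x t|}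
    with hVdef
  obtain ⟨M, hM⟩ := cadlag_bounded hx T
  have hM0 : 0 ≤ M := le_trans (abs_nonneg _) (hM T ⟨hT.le, le_refl T⟩)
  have habs : ∀ a b : ℝ, a ∈ Icc (0:ℝ) T → b ∈ Icc (0:ℝ) T → |x a - x b| ≤ 2 * M := by
    intro a b ha hb
    calc |x a - x b| ≤ |x a| + |x b| := abs_sub _ _
      _ ≤ M + M := add_le_add (hM a ha) (hM b hb)
      _ = 2 * M := by ring
  have hgrid : ∀ k : ℕ, ∀ r : Fin k,
      ((r : ℕ) : ℝ) * T / k ∈ Icc (0:ℝ) T ∧ (((r : ℕ) : ℝ) + 1) * T / k ∈ Icc (0:ℝ) T := by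
    intro k r
    have hk : (0:ℝ) < k := by
      have : 0 < k := Nat.pos_of_ne_zero (by rintro rfl; exact r.elim0)
      exact_mod_cast this
    have hr1 : ((r : ℕ) : ℝ) + 1 ≤ (k : ℝ) := by exact_mod_cast r.2
    have hr0 : (0:ℝ) ≤ ((r : ℕ) : ℝ) := Nat.cast_nonneg _
    refine ⟨⟨by positivity, ?_⟩, ⟨by positivity, ?_⟩⟩
    · rw [div_le_iff₀ hk]; nlinarith
    · rw [div_le_iff₀ hk]; nlinarith
  have hfub : ∀ k, f k ≤ 2 * M := by
    intro k
    exact Real.iSup_le (fun r => habs _ _ (hgrid k r).2 (hgrid k r).1) (by linarith)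
  have hf0 : ∀ k, 0 ≤ f k := fun k => Real.iSup_nonneg fun r => abs_nonneg _
  have hfb_le : IsBoundedUnder (· ≤ ·) atTop f := isBoundedUnder_of ⟨2 * M, hfub⟩
  have hfb_ge : IsBoundedUnder (· ≥ ·) atTop f := isBoundedUnder_of ⟨0, hf0⟩
  have hLbd : ∀ t : ℝ, 0 < t → t ≤ T → |Function.leftLim x t| ≤ M := by
    intro t ht0 htT
    obtain ⟨L, hL⟩ := hx.2 t ht0
    rw [leftLim_eq_of_tendsto hL]
    refine le_of_tendsto hL.abs ?_
    filter_upwards [Ioo_mem_nhdsLT ht0] with s hs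
    exact hM s ⟨hs.1.le, hs.2.le.trans htT⟩
  have hVbdd : BddAbove V := by
    refine ⟨2 * M, ?_⟩
    rintro v ⟨t, ht0, htT, rfl⟩
    calc |x t - Function.leftLim x t| ≤ |x t| + |Function.leftLim x t| := abs_sub _ _
      _ ≤ M + M := add_le_add (hM t ⟨ht0.le, htT⟩) (hLbd t ht0 htT)
      _ = 2 * M := by ring
  have hVne : V.Nonempty := ⟨_, T, hT, le_refl T, rfl⟩
  have hV0 : 0 ≤ sSup V :=
    le_trans (abs_nonneg _) (le_csSup hVbdd ⟨T, hT, le_refl T, rfl⟩)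
  -- lower bound
  have lower : sSup V ≤ limsup f atTop := by
    refine csSup_le hVne ?_
    rintro v ⟨t, ht0, htT, rfl⟩
    set r : ℕ → ℕ := fun k => ⌈t * k / T⌉₊ with hrdef
    set u : ℕ → ℝ := fun k => ((r k : ℝ) - 1) * T / k with hudef
    set w : ℕ → ℝ := fun k => (r k : ℝ) * T / k with hwdef
    have hkey : ∀ k : ℕ, 1 ≤ k → u k < t ∧ t ≤ w k ∧ 1 ≤ r k ∧ r k ≤ k := by
      intro k hk
      have hk0 : (0:ℝ) < k := by exact_mod_cast hk
      have harg : 0 < t * k / T := by positivity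
      have h1 : 1 ≤ r k := Nat.ceil_pos.mpr harg
      have h2 : r k ≤ k := Nat.ceil_le.mpr (by rw [div_le_iff₀ hT]; nlinarith)
      have heq : t * k / T * T / k = t := by field_simp
      refine ⟨?_, ?_, h1, h2⟩
      · have hlt : (r k : ℝ) - 1 < t * k / T := by
          have := Nat.ceil_lt_add_one harg.le
          simp only [hrdef] at *
          linarith
        calc ((r k : ℝ) - 1) * T / k < (t * k / T) * T / k :=
              (div_lt_div_iff_of_pos_right hk0).mpr (mul_lt_mul_of_pos_right hlt hT)
          _ = t := heq
      · have hle : t * k / T ≤ (r k : ℝ) := Nat.le_ceil _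
        calc t = (t * k / T) * T / k := heq.symm
          _ ≤ (r k : ℝ) * T / k :=
              (div_le_div_iff_of_pos_right hk0).mpr (mul_le_mul_of_nonneg_right hle hT.le)
    have hdiff : ∀ k : ℕ, w k - u k = T / k := by
      intro k; simp only [hudef, hwdef]; ring
    have hTk : Tendsto (fun k : ℕ => T / (k:ℝ)) atTop (𝓝 0) :=
      tendsto_const_div_atTop_nhds_zero_nat T
    have hwt : Tendsto w atTop (𝓝 t) := by
      refine tendsto_of_tendsto_of_tendsto_of_le_of_le' tendsto_const_nhds
        (by simpa using tendsto_const_nhds.add hTk : Tendsto (fun k:ℕ => t + T/k) atTop (𝓝 t))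
        ?_ ?_
      · filter_upwards [eventually_ge_atTop 1] with k hk
        exact (hkey k hk).2.1
      · filter_upwards [eventually_ge_atTop 1] with k hk
        have := (hkey k hk).1
        have hd := hdiff k
        linarith
    have hut : Tendsto u atTop (𝓝 t) := by
      refine tendsto_of_tendsto_of_tendsto_of_le_of_le'
        (by simpa using tendsto_const_nhds.sub hTk : Tendsto (fun k:ℕ => t - T/k) atTop (𝓝 t))
        tendsto_const_nhds ?_ ?_
      · filter_upwards [eventually_ge_atTop 1] with k hk
        have := (hkey k hk).2.1
        have hd := hdiff k
        linarith
      · filter_upwards [eventually_ge_atTop 1] with k hk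
        exact (hkey k hk).1.le
    have hxw : Tendsto (fun k => x (w k)) atTop (𝓝 (x t)) :=
      cadlag_tendsto_right hx ht0.le hwt
        ((eventually_ge_atTop 1).mono fun k hk => (hkey k hk).2.1)
    have hxu : Tendsto (fun k => x (u k)) atTop (𝓝 (Function.leftLim x t)) :=
      cadlag_tendsto_left hx ht0 hut
        ((eventually_ge_atTop 1).mono fun k hk => (hkey k hk).1)
    have hg : Tendsto (fun k => |x (w k) - x (u k)|) atTop
        (𝓝 |x t - Function.leftLim x t|) := (hxw.sub hxu).abs
    have hgf : ∀ᶠ k in atTop, |x (w k) - x (u k)| ≤ f k := by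
      filter_upwards [eventually_ge_atTop 1] with k hk
      obtain ⟨hu', hw', h1, h2⟩ := hkey k hk
      have hik : r k - 1 < k := by omega
      have hle := le_ciSup (Set.Finite.bddAbove (Set.finite_range
        (fun r : Fin k => |x (((r : ℕ) + 1) * T / k) - x ((r : ℕ) * T / k)|)))
        (⟨r k - 1, hik⟩ : Fin k)
      have hc : ((r k - 1 : ℕ) : ℝ) = (r k : ℝ) - 1 := by
        rw [Nat.cast_sub h1]; norm_num
      simp only [hfdef, hudef, hwdef]
      convert hle using 3
      · rfl
      · rw [hc]; congr 1; ring
      · rw [hc]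
    calc |x t - Function.leftLim x t|
        = limsup (fun k => |x (w k) - x (u k)|) atTop := hg.limsup_eq.symm
      _ ≤ limsup f atTop := by
          have hgb : IsBoundedUnder (· ≥ ·) atTop (fun k => |x (w k) - x (u k)|) :=
            isBoundedUnder_of ⟨0, fun k => abs_nonneg _⟩
          exact limsup_le_limsup hgf hgb.isCoboundedUnder_le hfb_le
  -- upper bound
  have upper : limsup f atTop ≤ sSup V := by
    by_contra hcon
    push_neg at hcon
    obtain ⟨b, hb1, hb2⟩ := exists_between hcon
    have hb0 : 0 < b := lt_of_le_of_lt hV0 hb1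
    have hfreq : ∃ᶠ k in atTop, b < f k :=
      frequently_lt_of_lt_limsup (hfb_ge.isCoboundedUnder_le) hb2
    obtain ⟨φ, hφ, hφP⟩ := extraction_of_frequently_atTop hfreq
    have hφ1 : ∀ n, 1 ≤ φ n := by
      intro n
      by_contra hcc
      have h0 : φ n = 0 := by omega
      have hf00 : f (φ n) ≤ 0 := by
        rw [h0]; exact Real.iSup_le (fun r => r.elim0) le_rfl
      linarith [hφP n]
    have hsel : ∀ n, ∃ i : Fin (φ n),
        b < |x (((i : ℕ) + 1) * T / (φ n)) - x ((i : ℕ) * T / (φ n))| := by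
      intro n
      have : Nonempty (Fin (φ n)) := ⟨⟨0, hφ1 n⟩⟩
      exact exists_lt_of_lt_ciSup (hφP n)
    choose i hi using hsel
    set u : ℕ → ℝ := fun n => ((i n : ℕ) : ℝ) * T / (φ n) with hudef
    set w : ℕ → ℝ := fun n => (((i n : ℕ) : ℝ) + 1) * T / (φ n) with hwdef
    have humem : ∀ n, u n ∈ Icc (0:ℝ) T := fun n => (hgrid (φ n) (i n)).1
    have hwmem : ∀ n, w n ∈ Icc (0:ℝ) T := fun n => (hgrid (φ n) (i n)).2
    have huw : ∀ n, u n < w n := by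
      intro n
      have hk0 : (0:ℝ) < φ n := by exact_mod_cast hφ1 n
      have : (0:ℝ) < T / φ n := by positivity
      have hd : w n - u n = T / φ n := by simp only [hudef, hwdef]; ring
      linarith
    have hTφ : Tendsto (fun n => T / (φ n : ℝ)) atTop (𝓝 0) :=
      (tendsto_const_div_atTop_nhds_zero_nat T).comp hφ.tendsto_atTop
    obtain ⟨t, htmem, ψ, hψ, hut⟩ := isCompact_Icc.tendsto_subseq humem
    have hut' : Tendsto (fun n => u (ψ n)) atTop (𝓝 t) := hut
    have hwt : Tendsto (fun n => w (ψ n)) atTop (𝓝 t) := by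
      have heq : (fun n => w (ψ n)) = fun n => u (ψ n) + T / (φ (ψ n)) := by
        funext n; simp only [hudef, hwdef]; ring
      rw [heq]
      simpa using hut'.add (hTφ.comp hψ.tendsto_atTop)
    have hcases : ∀ᶠ n in (atTop : Filter ℕ),
        t ≤ u (ψ n) ∨ w (ψ n) < t ∨ (u (ψ n) < t ∧ t ≤ w (ψ n)) := by
      refine Eventually.of_forall fun n => ?_
      rcases le_or_gt t (u (ψ n)) with h | h
      · exact Or.inl h
      · rcases lt_or_ge (w (ψ n)) t with h' | h'
        · exact Or.inr (Or.inl h')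
        · exact Or.inr (Or.inr ⟨h, h'⟩)
    have habs_lim : ∀ c : ℝ, ∀ χ : ℕ → ℕ, StrictMono χ →
        Tendsto (fun m => |x (w (ψ (χ m))) - x (u (ψ (χ m)))|) atTop (𝓝 c) → b ≤ c := by
      intro c χ hχ hc
      exact ge_of_tendsto' hc fun m => (hi (ψ (χ m))).le
    rcases frequently_or_distrib.mp hcases.frequently with h | h
    · obtain ⟨χ, hχ, hP⟩ := extraction_of_frequently_atTop h
      have hu2 : Tendsto (fun m => u (ψ (χ m))) atTop (𝓝 t) := hut'.comp hχ.tendsto_atTop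
      have hw2 : Tendsto (fun m => w (ψ (χ m))) atTop (𝓝 t) := hwt.comp hχ.tendsto_atTop
      have hx1 := cadlag_tendsto_right hx htmem.1 hu2 (Eventually.of_forall hP)
      have hx2 := cadlag_tendsto_right hx htmem.1 hw2
        (Eventually.of_forall fun m => (hP m).trans (huw _).le)
      have := habs_lim _ χ hχ (hx2.sub hx1).abs
      simp at this
      linarith
    rcases frequently_or_distrib.mp h with h | h
    · obtain ⟨χ, hχ, hP⟩ := extraction_of_frequently_atTop h
      have ht0 : 0 < t := lt_of_le_of_lt (lt_of_le_of_lt (humem (ψ (χ 0))).1 (huw _)).le (hP 0)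
      have hu2 : Tendsto (fun m => u (ψ (χ m))) atTop (𝓝 t) := hut'.comp hχ.tendsto_atTop
      have hw2 : Tendsto (fun m => w (ψ (χ m))) atTop (𝓝 t) := hwt.comp hχ.tendsto_atTop
      have hx1 := cadlag_tendsto_left hx ht0 hu2
        (Eventually.of_forall fun m => (huw _).trans (hP m))
      have hx2 := cadlag_tendsto_left hx ht0 hw2 (Eventually.of_forall hP)
      have := habs_lim _ χ hχ (hx2.sub hx1).abs
      simp at this
      linarith
    · obtain ⟨χ, hχ, hP⟩ := extraction_of_frequently_atTop h
      have ht0 : 0 < t := lt_of_le_of_lt (humem (ψ (χ 0))).1 (hP 0).1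
      have hu2 : Tendsto (fun m => u (ψ (χ m))) atTop (𝓝 t) := hut'.comp hχ.tendsto_atTop
      have hw2 : Tendsto (fun m => w (ψ (χ m))) atTop (𝓝 t) := hwt.comp hχ.tendsto_atTop
      have hx1 := cadlag_tendsto_left hx ht0 hu2 (Eventually.of_forall fun m => (hP m).1)
      have hx2 := cadlag_tendsto_right hx ht0.le hw2 (Eventually.of_forall fun m => (hP m).2)
      have hble := habs_lim _ χ hχ (hx2.sub hx1).abs
      have hmem : |x t - Function.leftLim x t| ∈ V := ⟨t, ht0, htmem.2, rfl⟩
      have := le_csSup hVbdd hmem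
      linarith
  exact le_antisymm upper lower

end RV
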